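/- The form E(β, γ) := 2·Re(Tr(β J γ*)) on M_{n×r}(ℂ) is ℝ-bilinear and alternating (E(β, β) = 0 for all β), and it is positive with respect to the complex structure I_Z: for every β ≠ 0 one has E(β, I_Z β) > 0. -/

import Mathlib

open Matrix ComplexOrder

noncomputable section

/-- The entrywise complex conjugate of a matrix. -/
def matConj {k l : Type*} (M : Matrix k l ℂ) : Matrix k l ℂ :=
  M.map (starRingEnd ℂ)

/-- The matrix `J = [[0_m, -1_m],[1_m, 0_m]]` over `ℂ`. -/
def formJ (m : ℕ) : Matrix (Fin m ⊕ Fin m) (Fin m ⊕ Fin m) ℂ :=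
  Matrix.fromBlocks 0 (-1) 1 0

/-- The real-valued form `E(β, γ) = 2·Re(Tr(β J γ*))` on `M_{n×r}(ℂ)` (with `r = 2m`,
columns indexed by `Fin m ⊕ Fin m`). -/
def formE {n m : ℕ} (β γ : Matrix (Fin n) (Fin m ⊕ Fin m) ℂ) : ℝ :=
  2 * (Matrix.trace (β * formJ m * γᴴ)).re

/-- The formula for the `ℝ`-linear map `φ_Z : β = (β₁ | β₂) ↦ (β₁Z + β₂, conj(β₁)Zᵀ + conj(β₂))`,
where `β₁` and `β₂` are the first and last `m` columns of `β`. -/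
def phiZFormula {n m : ℕ} (Z : Matrix (Fin m) (Fin m) ℂ)
    (β : Matrix (Fin n) (Fin m ⊕ Fin m) ℂ) :
    Matrix (Fin n) (Fin m) ℂ × Matrix (Fin n) (Fin m) ℂ :=
  (β.submatrix id Sum.inl * Z + β.submatrix id Sum.inr,
    matConj (β.submatrix id Sum.inl) * Zᵀ + matConj (β.submatrix id Sum.inr))

/- ### Auxiliary lemmas -/

lemma traceAux_nonneg {n m : ℕ} {M : Matrix (Fin m) (Fin m) ℂ} (hM : M.PosSemidef)
    (A : Matrix (Fin n) (Fin m) ℂ) : 0 ≤ (Matrix.trace (A * M * Aᴴ)).re := by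
  have h : ∀ j, (A * M * Aᴴ) j j = dotProduct (star (star (A j))) (M *ᵥ (star (A j))) := by
    intro j
    simp only [Matrix.mul_apply, dotProduct, Matrix.mulVec, Matrix.conjTranspose_apply,
      Pi.star_apply, star_star, Finset.mul_sum, Finset.sum_mul]
    rw [Finset.sum_comm]
    congr 1; ext k; congr 1; ext l; ring
  rw [Matrix.trace, Complex.re_sum]
  apply Finset.sum_nonneg
  intro j _
  rw [Matrix.diag_apply, h j]
  exact (Complex.le_def.mp (hM.dotProduct_mulVec_nonneg _)).1

lemma traceAux_pos {n m : ℕ} {M : Matrix (Fin m) (Fin m) ℂ} (hM : M.PosDef)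
    {A : Matrix (Fin n) (Fin m) ℂ} (hA : A ≠ 0) : 0 < (Matrix.trace (A * M * Aᴴ)).re := by
  have h : ∀ j, (A * M * Aᴴ) j j = dotProduct (star (star (A j))) (M *ᵥ (star (A j))) := by
    intro j
    simp only [Matrix.mul_apply, dotProduct, Matrix.mulVec, Matrix.conjTranspose_apply,
      Pi.star_apply, star_star, Finset.mul_sum, Finset.sum_mul]
    rw [Finset.sum_comm]
    congr 1; ext k; congr 1; ext l; ring
  obtain ⟨j₀, hj₀⟩ : ∃ j, A j ≠ 0 := by
    by_contra hc
    push_neg at hc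
    exact hA (by ext i j; simpa using congrFun (hc i) j)
  rw [Matrix.trace, Complex.re_sum]
  apply Finset.sum_pos'
  · intro j _
    rw [Matrix.diag_apply, h j]
    exact (Complex.le_def.mp (hM.posSemidef.dotProduct_mulVec_nonneg _)).1
  · refine ⟨j₀, Finset.mem_univ _, ?_⟩
    rw [Matrix.diag_apply, h j₀]
    have : star (A j₀) ≠ 0 := fun hs => hj₀ (by simpa using congrArg star hs)
    exact (Complex.lt_def.mp (hM.dotProduct_mulVec_pos this)).1

lemma keyA {k l : Type*} [Fintype l] [DecidableEq l]
    (X Y : Matrix l l ℂ) (hYinv : Y⁻¹ * Y = 1) (B1 B2 : Matrix k l ℂ) :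
    (B1 * X + B2) * Y⁻¹ * (X + Complex.I • Y) +
      (-(B1 * Y) - (B1 * X + B2) * Y⁻¹ * X) =
    Complex.I • (B1 * (X + Complex.I • Y) + B2) := by
  have hWY : (B1 * X + B2) * Y⁻¹ * Y = B1 * X + B2 := by
    rw [Matrix.mul_assoc, hYinv, Matrix.mul_one]
  simp only [Matrix.mul_add, Matrix.mul_smul, smul_add, smul_smul,
    Complex.I_mul_I, neg_one_smul, hWY]
  abel

lemma keyB {k l : Type*} [Fintype l] [DecidableEq l]
    (X Y : Matrix l l ℂ) (hYinv : Y⁻¹ * Y = 1) (B1 B2 : Matrix k l ℂ) :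
    (B1 * X + B2) * Y⁻¹ * (X - Complex.I • Y) +
      (-(B1 * Y) - (B1 * X + B2) * Y⁻¹ * X) =
    (-Complex.I) • (B1 * (X - Complex.I • Y) + B2) := by
  have hWY : (B1 * X + B2) * Y⁻¹ * Y = B1 * X + B2 := by
    rw [Matrix.mul_assoc, hYinv, Matrix.mul_one]
  simp only [Matrix.mul_sub, Matrix.mul_smul, smul_add, smul_sub, smul_smul,
    neg_mul, Complex.I_mul_I, neg_neg, one_smul, neg_smul, hWY]
  abel

lemma keyTrace {k l : Type*} [Fintype l] [DecidableEq l] [Fintype k]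
    (X Y : Matrix l l ℂ) (hX : Xᴴ = X) (hY : Yᴴ = Y) (hYi : (Y⁻¹)ᴴ = Y⁻¹)
    (B1 B2 : Matrix k l ℂ) :
    Matrix.trace (B2 * ((B1 * X + B2) * Y⁻¹)ᴴ)
      - Matrix.trace (B1 * (-(B1 * Y) - (B1 * X + B2) * Y⁻¹ * X)ᴴ) =
    Matrix.trace (B1 * Y * B1ᴴ)
      + Matrix.trace ((B1 * X + B2) * Y⁻¹ * (B1 * X + B2)ᴴ) := by
  simp only [Matrix.conjTranspose_sub, Matrix.conjTranspose_neg, Matrix.conjTranspose_mul,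
    hX, hY, hYi, Matrix.conjTranspose_add, Matrix.mul_add, Matrix.add_mul,
    Matrix.mul_sub, Matrix.sub_mul, Matrix.mul_neg, Matrix.neg_mul,
    Matrix.trace_add, Matrix.trace_sub, Matrix.trace_neg, Matrix.mul_assoc]
  ring

lemma matConj_mul {k l o : Type*} [Fintype l] (A : Matrix k l ℂ) (B : Matrix l o ℂ) :
    matConj (A * B) = matConj A * matConj B := Matrix.map_mul

lemma matConj_add {k l : Type*} (A B : Matrix k l ℂ) :
    matConj (A + B) = matConj A + matConj B := Matrix.map_add _ (by simp) _ _

lemma matConj_smul {k l : Type*} (c : ℂ) (A : Matrix k l ℂ) :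
    matConj (c • A) = (starRingEnd ℂ c) • matConj A := by ext i j; simp [matConj]

lemma matConj_conjTranspose {k l : Type*} (A : Matrix k l ℂ) :
    matConj (Aᴴ) = Aᵀ := by ext i j; simp [matConj, Matrix.conjTranspose_apply]

/-- The form `E(β, γ) = 2·Re(Tr(β J γ*))` is `ℝ`-bilinear and alternating, and it is
positive with respect to the complex structure `I_Z = φ_Z⁻¹ ∘ (i·) ∘ φ_Z`: for every
`β ≠ 0` one has `E(β, I_Z β) > 0`. -/
theorem statement16 {n m : ℕ} (hn : 1 ≤ n) (hm : 1 ≤ m)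
    (Z : Matrix (Fin m) (Fin m) ℂ)
    (hZ : ((2 * Complex.I)⁻¹ • (Z - Zᴴ)).PosDef)
    (φ : Matrix (Fin n) (Fin m ⊕ Fin m) ℂ ≃ₗ[ℝ]
      (Matrix (Fin n) (Fin m) ℂ × Matrix (Fin n) (Fin m) ℂ))
    (hφ : ∀ β, φ β = phiZFormula Z β) :
    (∀ β β' γ : Matrix (Fin n) (Fin m ⊕ Fin m) ℂ,
      formE (β + β') γ = formE β γ + formE β' γ) ∧
    (∀ β γ γ' : Matrix (Fin n) (Fin m ⊕ Fin m) ℂ,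
      formE β (γ + γ') = formE β γ + formE β γ') ∧
    (∀ (c : ℝ) (β γ : Matrix (Fin n) (Fin m ⊕ Fin m) ℂ),
      formE (c • β) γ = c * formE β γ) ∧
    (∀ (c : ℝ) (β γ : Matrix (Fin n) (Fin m ⊕ Fin m) ℂ),
      formE β (c • γ) = c * formE β γ) ∧
    (∀ β : Matrix (Fin n) (Fin m ⊕ Fin m) ℂ, formE β β = 0) ∧
    (∀ β : Matrix (Fin n) (Fin m ⊕ Fin m) ℂ, β ≠ 0 →
      0 < formE β (φ.symm (Complex.I • φ β))) := by
  refine ⟨?_, ?_, ?_, ?_, ?_, ?_⟩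
  · intro β β' γ
    simp [formE, Matrix.add_mul, Matrix.trace_add]; ring
  · intro β γ γ'
    simp [formE, Matrix.conjTranspose_add, Matrix.mul_add, Matrix.trace_add]; ring
  · intro c β γ
    simp [formE, Matrix.smul_mul, Matrix.trace_smul, Complex.smul_re]; ring
  · intro c β γ
    simp [formE, Matrix.conjTranspose_smul, Matrix.mul_smul, Matrix.trace_smul,
      Complex.smul_re]
    ring
  · intro β
    have hJ : (formJ m)ᴴ = -(formJ m) := by
      simp [formJ, Matrix.fromBlocks_conjTranspose, Matrix.fromBlocks_neg]
    have h : star (Matrix.trace (β * formJ m * βᴴ)) = -(Matrix.trace (β * formJ m * βᴴ)) := by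
      rw [← Matrix.trace_conjTranspose]
      simp only [Matrix.conjTranspose_mul, Matrix.conjTranspose_conjTranspose, hJ]
      rw [Matrix.neg_mul, Matrix.mul_neg, Matrix.trace_neg, ← Matrix.mul_assoc]
    have hre : (Matrix.trace (β * formJ m * βᴴ)).re = 0 := by
      have := congrArg Complex.re h
      simp at this; linarith
    simp [formE, hre]
  · intro β hβ
    set Y : Matrix (Fin m) (Fin m) ℂ := (2 * Complex.I)⁻¹ • (Z - Zᴴ) with hYdef
    set X : Matrix (Fin m) (Fin m) ℂ := (2 : ℂ)⁻¹ • (Z + Zᴴ) with hXdef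
    have hZXY : Z = X + Complex.I • Y := by
      rw [hXdef, hYdef]; ext i j
      simp only [Matrix.add_apply, Matrix.smul_apply, Matrix.sub_apply, smul_eq_mul]
      field_simp
      ring
    have hZHXY : Zᴴ = X - Complex.I • Y := by
      rw [hXdef, hYdef]; ext i j
      simp only [Matrix.sub_apply, Matrix.add_apply, Matrix.smul_apply, smul_eq_mul]
      field_simp
      ring
    have hYH : Yᴴ = Y := hZ.isHermitian
    have hXH : Xᴴ = X := by
      rw [hXdef]
      rw [Matrix.conjTranspose_smul, Matrix.conjTranspose_add,
        Matrix.conjTranspose_conjTranspose]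
      simp [add_comm]
    have hYdet : IsUnit Y.det := (Matrix.isUnit_iff_isUnit_det Y).mp hZ.isUnit
    have hYinv : Y⁻¹ * Y = 1 := Matrix.nonsing_inv_mul Y hYdet
    have hYiH : (Y⁻¹)ᴴ = Y⁻¹ := by rw [Matrix.conjTranspose_nonsing_inv, hYH]
    set B1 : Matrix (Fin n) (Fin m) ℂ := β.submatrix id Sum.inl with hB1
    set B2 : Matrix (Fin n) (Fin m) ℂ := β.submatrix id Sum.inr with hB2
    have hβfc : Matrix.fromCols B1 B2 = β := by
      ext i j; cases j <;> simp [Matrix.fromCols, hB1, hB2]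
    set G1 : Matrix (Fin n) (Fin m) ℂ := (B1 * X + B2) * Y⁻¹ with hG1
    set G2 : Matrix (Fin n) (Fin m) ℂ := -(B1 * Y) - (B1 * X + B2) * Y⁻¹ * X with hG2
    set γ : Matrix (Fin n) (Fin m ⊕ Fin m) ℂ := Matrix.fromCols G1 G2 with hγ
    have hsub1 : γ.submatrix id Sum.inl = G1 := by ext i j; simp [hγ, Matrix.fromCols]
    have hsub2 : γ.submatrix id Sum.inr = G2 := by ext i j; simp [hγ, Matrix.fromCols]
    have keyAh : G1 * Z + G2 = Complex.I • (B1 * Z + B2) := by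
      rw [hG1, hG2, hZXY]; exact keyA X Y hYinv B1 B2
    have keyBh : G1 * Zᴴ + G2 = (-Complex.I) • (B1 * Zᴴ + B2) := by
      rw [hG1, hG2, hZHXY]; exact keyB X Y hYinv B1 B2
    have hφγ : φ γ = Complex.I • φ β := by
      rw [hφ, hφ]
      unfold phiZFormula
      rw [hsub1, hsub2, ← hB1, ← hB2, Prod.smul_mk]
      refine Prod.ext keyAh ?_
      have hZt : Zᵀ = matConj Zᴴ := (matConj_conjTranspose Z).symm
      rw [hZt, ← matConj_mul, ← matConj_mul, ← matConj_add, ← matConj_add, keyBh,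
        matConj_smul]
      simp
    have hsymm : φ.symm (Complex.I • φ β) = γ :=
      (LinearEquiv.symm_apply_eq φ).mpr hφγ.symm
    rw [hsymm]
    have hE : formE β γ = 2 * (Matrix.trace (B2 * G1ᴴ) - Matrix.trace (B1 * G2ᴴ)).re := by
      rw [formE, ← hβfc, hγ]
      rw [show formJ m = Matrix.fromBlocks 0 (-1) 1 0 from rfl]
      rw [Matrix.fromCols_mul_fromBlocks,
        Matrix.conjTranspose_fromCols_eq_fromRows_conjTranspose,
        Matrix.fromCols_mul_fromRows]
      simp [Matrix.neg_mul, Matrix.trace_add, Matrix.trace_neg, sub_eq_add_neg]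
    rw [hE, hG1, hG2,
      keyTrace X Y hXH hYH hYiH B1 B2, Complex.add_re]
    have hYiPD : (Y⁻¹).PosDef := hZ.inv
    rcases eq_or_ne B1 0 with hB1z | hB1z
    · have hB2z : B1 * X + B2 ≠ 0 := by
        rw [hB1z, Matrix.zero_mul, zero_add]
        intro h
        apply hβ
        rw [← hβfc, hB1z, h]
        ext i j; cases j <;> simp [Matrix.fromCols]
      have h1 : 0 ≤ (Matrix.trace (B1 * Y * B1ᴴ)).re := traceAux_nonneg hZ.posSemidef B1
      have h2 : 0 < (Matrix.trace ((B1 * X + B2) * Y⁻¹ * (B1 * X + B2)ᴴ)).re :=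
        traceAux_pos hYiPD hB2z
      linarith
    · have h1 : 0 < (Matrix.trace (B1 * Y * B1ᴴ)).re := traceAux_pos hZ hB1z
      have h2 : 0 ≤ (Matrix.trace ((B1 * X + B2) * Y⁻¹ * (B1 * X + B2)ᴴ)).re :=
        traceAux_nonneg hYiPD.posSemidef _
      linarith

end
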